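/- Let p be a prime, n ≥ 1, Γ a complete set of representatives of ℤ^n/pℤ^n containing 0 with Γ' = Γ \ {0}. Let R be the mask of a finitely supported 1-D filter H : ℤ → ℝ with dilation p, i.e., R(ω) = (1/p) Σ_K H(K) e^{-iKω}, and suppose R(0) = 1. If R is interpolatory (equivalently, H(0) = 1 and H(K) = 0 for all K ∈ pℤ \ {0}), then the prime coset sum mask C_{n,p}[R] is interpolatory: the finitely supported filter h : ℤ^n → ℝ whose mask (1/p^n) Σ_k h(k)e^{-ik·ω} equals C_{n,p}[R] satisfies h(0) = 1 and h(k) = 0 for all k ∈ pℤ^n \ {0}. -/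

import Mathlib

open scoped Real Classical

noncomputable section

/-- `eC x = e^{-ix}` as a complex number. -/
def eC (x : ℝ) : ℂ := Complex.exp (-(Complex.I * (x : ℂ)))

/-- **The prime coset sum preserves the interpolatory property.**  If the 1-D mask `R`
of a finitely supported filter `H` (with dilation `p`) is interpolatory, i.e. `H 0 = 1`
and `H K = 0` for `K ∈ pℤ \ {0}`, then the filter `h` of the prime coset sum mask
`C_{n,p}[R]` is interpolatory: `h 0 = 1` and `h k = 0` for all `k ∈ pℤ^n \ {0}`. -/
lemma eC_add (x y : ℝ) : eC (x + y) = eC x * eC y := by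
  rw [eC, eC, eC, ← Complex.exp_add]; push_cast; ring_nf

lemma eC_zero : eC 0 = 1 := by simp [eC]

def chi {n : ℕ} (m : Fin n → ℤ) : Multiplicative (Fin n → ℝ) →* ℂ where
  toFun ω := eC (∑ i, (m i : ℝ) * (Multiplicative.toAdd ω) i)
  map_one' := by simpa using eC_zero
  map_mul' a b := by
    simp only [toAdd_mul, Pi.add_apply, mul_add, Finset.sum_add_distrib]
    exact eC_add _ _

lemma chi_injective {n : ℕ} : Function.Injective (chi (n := n)) := by
  intro m m' hmm
  funext j
  by_contra hne
  have hd : (m j : ℝ) - (m' j : ℝ) ≠ 0 := by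
    intro hc
    apply hne
    have : (m j : ℝ) = (m' j : ℝ) := by linarith
    exact_mod_cast this
  set t : ℝ := Real.pi / ((m j : ℝ) - m' j) with ht
  have h1 : chi m (Multiplicative.ofAdd (Pi.single j t : Fin n → ℝ)) =
      chi m' (Multiplicative.ofAdd (Pi.single j t : Fin n → ℝ)) := by rw [hmm]
  have hs : ∀ (a : Fin n → ℤ), ∑ i, (a i : ℝ) * (Pi.single j t : Fin n → ℝ) i = a j * t := by
    intro a
    rw [Finset.sum_eq_single j]
    · simp
    · intro b _ hb; simp [Pi.single_apply, hb]
    · simp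
  simp only [chi, MonoidHom.coe_mk, OneHom.coe_mk, toAdd_ofAdd] at h1
  rw [hs m, hs m'] at h1
  have h2 : eC ((m j : ℝ) * t) * (eC ((m' j : ℝ) * t))⁻¹ = 1 := by
    rw [h1]; field_simp [eC]
  rw [eC, eC, ← Complex.exp_neg, ← Complex.exp_add] at h2
  have h3 : (-(Complex.I * ((m j : ℝ) * t)) + -(-(Complex.I * ((m' j : ℝ) * t)))) =
      -(Real.pi * Complex.I) := by
    have : ((m j : ℝ) * t - (m' j : ℝ) * t) = Real.pi := by
      rw [ht]; field_simp
    push_cast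
    rw [← this]; push_cast; ring
  push_cast at h2 h3
  rw [h3] at h2
  rw [Complex.exp_neg, Complex.exp_pi_mul_I] at h2
  norm_num at h2

lemma coeff_eq_zero {n : ℕ} (s : Finset (Fin n → ℤ)) (c : (Fin n → ℤ) → ℂ)
    (h0 : ∀ ω : Fin n → ℝ, ∑ m ∈ s, c m * eC (∑ i, (m i : ℝ) * ω i) = 0) :
    ∀ m ∈ s, c m = 0 := by
  have li := (linearIndependent_monoidHom (Multiplicative (Fin n → ℝ)) ℂ).comp
    (chi (n := n)) chi_injective
  rw [linearIndependent_iff'] at li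
  apply li s c
  funext ω
  have := h0 (Multiplicative.toAdd ω)
  simpa [chi, Finset.sum_apply] using this

theorem primeCosetSum_interpolatory
    (n : ℕ) (hn : 1 ≤ n) (p : ℕ) (hp : p.Prime)
    (Γ : Finset (Fin n → ℤ)) (hΓ0 : (0 : Fin n → ℤ) ∈ Γ)
    (hΓ : ∀ k : Fin n → ℤ, ∃! ν : Fin n → ℤ,
      ν ∈ Γ ∧ ∃ m : Fin n → ℤ, k = ν + (p : ℤ) • m)
    (H : ℤ → ℝ) (hHfin : (Function.support H).Finite)
    (R : ℝ → ℂ)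
    (hR : ∀ ξ : ℝ, R ξ = (1 / (p : ℂ)) * ∑ᶠ K : ℤ, (H K : ℂ) * eC ((K : ℝ) * ξ))
    (hR0 : R 0 = 1)
    (hHint : H 0 = 1 ∧ ∀ K : ℤ, K ≠ 0 → (p : ℤ) ∣ K → H K = 0)
    (h : (Fin n → ℤ) → ℝ) (hhfin : (Function.support h).Finite)
    (hmask : ∀ ω : Fin n → ℝ,
      (1 / (p : ℂ) ^ n) * ∑ᶠ k : Fin n → ℤ, (h k : ℂ) * eC (∑ i, (k i : ℝ) * ω i) =
      (1 / (((p : ℂ) - 1) * (p : ℂ) ^ (n - 1))) *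
        (1 - (p : ℂ) ^ (n - 1) + ∑ ν ∈ Γ.erase 0, R (∑ i, ω i * (ν i : ℝ)))) :
    h 0 = 1 ∧ ∀ k : Fin n → ℤ, k ≠ 0 → (∀ i, (p : ℤ) ∣ k i) → h k = 0 := by
  classical
  haveI : NeZero p := ⟨hp.ne_zero⟩
  set Γ' : Finset (Fin n → ℤ) := Γ.erase 0 with hG'def
  set S : Finset (Fin n → ℤ) := hhfin.toFinset with hSdef
  set T : Finset ℤ := hHfin.toFinset with hTdef
  set P : ℂ := (p : ℂ) with hPdef
  have hPne : P ≠ 0 := by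
    simp only [hPdef, Ne, Nat.cast_eq_zero]; exact hp.ne_zero
  have hP1 : P - 1 ≠ 0 := by
    rw [sub_ne_zero]
    simp only [hPdef, Ne, Nat.cast_eq_one]
    exact hp.one_lt.ne'
  have hn1 : n - 1 + 1 = n := Nat.succ_pred_eq_of_pos hn
  have hPn : P * P ^ (n - 1) = P ^ n := by
    rw [← pow_succ', hn1]
  set A : ℂ := 1 / ((P - 1) * P ^ (n - 1)) with hAdef
  set B : ℂ := 1 - P ^ (n - 1) with hBdef
  have cardΓ : Γ.card = p ^ n := by
    have h1 : Γ.card = Fintype.card (Fin n → ZMod p) := by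
      rw [← Finset.card_univ]
      apply Finset.card_bij (fun ν _ => fun i => ((ν i : ZMod p)))
      · intro a ha; exact Finset.mem_univ _
      · intro a ha b hb hab
        have hdvd : ∀ i, (p : ℤ) ∣ (b i - a i) := by
          intro i
          have h2 := congrFun hab i
          exact ((ZMod.intCast_eq_intCast_iff _ _ _).mp h2).dvd
        choose c hc using hdvd
        have hb' : b = a + (p : ℤ) • c := by
          funext i
          have := hc i
          simp only [Pi.add_apply, Pi.smul_apply, smul_eq_mul]
          omega
        exact ((hΓ b).unique ⟨hb, 0, by simp⟩ ⟨ha, c, hb'⟩).symm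
      · intro b _
        obtain ⟨ν, ⟨hνΓ, m, hkm⟩, -⟩ := hΓ (fun i => ((b i).val : ℤ))
        refine ⟨ν, hνΓ, ?_⟩
        funext i
        have h4 := congrFun hkm i
        simp only [Pi.add_apply, Pi.smul_apply, smul_eq_mul] at h4
        have h5 : ((ν i : ℤ) : ZMod p) = (((b i).val : ℤ) : ZMod p) := by
          rw [h4]; push_cast; simp
        rw [h5]; push_cast; simp [ZMod.natCast_val, ZMod.cast_id]
    rw [h1]; simp [ZMod.card]
  have cardΓ' : Γ'.card = p ^ n - 1 := by
    rw [hG'def, Finset.card_erase_of_mem hΓ0, cardΓ]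
  have hΓzero : ∀ ν ∈ Γ, (∀ i, (p : ℤ) ∣ ν i) → ν = 0 := by
    intro ν hν hdvd
    choose c hc using hdvd
    have hν' : ν = 0 + (p : ℤ) • c := by
      funext i
      simp only [Pi.add_apply, Pi.zero_apply, Pi.smul_apply, smul_eq_mul, zero_add]
      exact hc i
    exact (hΓ ν).unique ⟨hν, 0, by simp⟩ ⟨hΓ0, c, hν'⟩
  have hfin1 : ∀ ω : Fin n → ℝ,
      (∑ᶠ k : Fin n → ℤ, (h k : ℂ) * eC (∑ i, (k i : ℝ) * ω i)) =
      ∑ k ∈ S, (h k : ℂ) * eC (∑ i, (k i : ℝ) * ω i) := by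
    intro ω
    apply finsum_eq_finset_sum_of_support_subset
    intro k hk
    simp only [Function.mem_support] at hk
    simp only [hSdef, Set.Finite.coe_toFinset, Function.mem_support]
    intro hk0; apply hk; rw [hk0]; simp
  have hfin2 : ∀ ξ : ℝ,
      (∑ᶠ K : ℤ, (H K : ℂ) * eC ((K : ℝ) * ξ)) =
      ∑ K ∈ T, (H K : ℂ) * eC ((K : ℝ) * ξ) := by
    intro ξ
    apply finsum_eq_finset_sum_of_support_subset
    intro K hK
    simp only [Function.mem_support] at hK
    simp only [hTdef, Set.Finite.coe_toFinset, Function.mem_support]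
    intro hK0; apply hK; rw [hK0]; simp
  have key1 : ∀ ω : Fin n → ℝ,
      (1 / P ^ n) * ∑ k ∈ S, (h k : ℂ) * eC (∑ i, (k i : ℝ) * ω i) =
      A * (B + (1 / P) * ∑ q ∈ T ×ˢ Γ',
        (H q.1 : ℂ) * eC (∑ i, ((q.1 • q.2 : Fin n → ℤ) i : ℝ) * ω i)) := by
    intro ω
    have hm := hmask ω
    rw [hfin1 ω] at hm
    rw [hm, hAdef, hBdef]
    congr 1
    congr 1
    have hRterm : ∀ ν ∈ Γ', R (∑ i, ω i * (ν i : ℝ)) =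
        (1 / P) * ∑ K ∈ T, (H K : ℂ) * eC (∑ i, ((K • ν : Fin n → ℤ) i : ℝ) * ω i) := by
      intro ν _
      rw [hR, hfin2]
      congr 1
      apply Finset.sum_congr rfl
      intro K _
      congr 2
      rw [Finset.mul_sum]
      apply Finset.sum_congr rfl
      intro i _
      simp only [Pi.smul_apply, smul_eq_mul]
      push_cast
      ring
    rw [Finset.sum_congr rfl hRterm, ← Finset.mul_sum, Finset.sum_product]
    congr 1
    exact Finset.sum_comm
  set U : Finset (Fin n → ℤ) :=
    insert 0 (S ∪ (T ×ˢ Γ').image (fun q => q.1 • q.2)) with hUdef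
  have hSU : S ⊆ U := fun x hx =>
    Finset.mem_insert_of_mem (Finset.mem_union_left _ hx)
  have h0U : (0 : Fin n → ℤ) ∈ U := by rw [hUdef]; exact Finset.mem_insert_self _ _
  set d : (Fin n → ℤ) → ℂ := fun m =>
    (1 / P ^ n) * (h m : ℂ) - (if m = 0 then A * B else 0)
      - A * (1 / P) * ∑ q ∈ (T ×ˢ Γ').filter (fun q => q.1 • q.2 = m), (H q.1 : ℂ)
    with hddef
  have key0 : ∀ ω : Fin n → ℝ, ∑ m ∈ U, d m * eC (∑ i, (m i : ℝ) * ω i) = 0 := by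
    intro ω
    simp only [hddef, sub_mul, Finset.sum_sub_distrib]
    have e1 : ∑ m ∈ U, 1 / P ^ n * (h m : ℂ) * eC (∑ i, (m i : ℝ) * ω i)
        = 1 / P ^ n * ∑ k ∈ S, (h k : ℂ) * eC (∑ i, (k i : ℝ) * ω i) := by
      have hz : ∀ x ∈ U, x ∉ S → 1 / P ^ n * (h x : ℂ) * eC (∑ i, (x i : ℝ) * ω i) = 0 := by
        intro x hxU hxS
        have hx : h x = 0 := by
          by_contra hx
          exact hxS (by simp [hSdef, Set.Finite.mem_toFinset, Function.mem_support, hx])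
        simp [hx]
      rw [← Finset.sum_subset hSU hz, Finset.mul_sum]
      exact Finset.sum_congr rfl (fun k _ => by ring)
    have e2 : ∑ m ∈ U, (if m = 0 then A * B else 0) * eC (∑ i, (m i : ℝ) * ω i) = A * B := by
      have hite : ∀ m ∈ U, (if m = 0 then A * B else 0) * eC (∑ i, (m i : ℝ) * ω i)
          = if m = 0 then A * B * eC (∑ i, (m i : ℝ) * ω i) else 0 := by
        intro m _; split <;> simp
      rw [Finset.sum_congr rfl hite,
        Finset.sum_ite_eq' U 0 (fun m => A * B * eC (∑ i, ((m : Fin n → ℤ) i : ℝ) * ω i)),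
        if_pos h0U]
      simp [eC_zero]
    have e3 : ∑ m ∈ U, A * (1 / P) *
          (∑ q ∈ (T ×ˢ Γ').filter (fun q => q.1 • q.2 = m), (H q.1 : ℂ)) *
          eC (∑ i, (m i : ℝ) * ω i)
        = A * (1 / P) * ∑ q ∈ T ×ˢ Γ',
          (H q.1 : ℂ) * eC (∑ i, ((q.1 • q.2 : Fin n → ℤ) i : ℝ) * ω i) := by
      have hmap : ∀ q ∈ T ×ˢ Γ', (fun q : ℤ × (Fin n → ℤ) => q.1 • q.2) q ∈ U := by
        intro q hq
        exact Finset.mem_insert_of_mem (Finset.mem_union_right _ (Finset.mem_image_of_mem _ hq))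
      rw [← Finset.sum_fiberwise_of_maps_to hmap
        (fun q => (H q.1 : ℂ) * eC (∑ i, ((q.1 • q.2 : Fin n → ℤ) i : ℝ) * ω i)),
        Finset.mul_sum]
      apply Finset.sum_congr rfl
      intro m _
      have hinner : (∑ q ∈ (T ×ˢ Γ').filter (fun q => q.1 • q.2 = m), (H q.1 : ℂ)) *
            eC (∑ i, (m i : ℝ) * ω i)
          = ∑ q ∈ (T ×ˢ Γ').filter (fun q => q.1 • q.2 = m),
            (H q.1 : ℂ) * eC (∑ i, ((q.1 • q.2 : Fin n → ℤ) i : ℝ) * ω i) := by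
        rw [Finset.sum_mul]
        apply Finset.sum_congr rfl
        intro q hq
        rw [(Finset.mem_filter.mp hq).2]
      calc A * (1 / P) * (∑ q ∈ (T ×ˢ Γ').filter (fun q => q.1 • q.2 = m), (H q.1 : ℂ)) *
            eC (∑ i, (m i : ℝ) * ω i)
          = A * (1 / P) * ((∑ q ∈ (T ×ˢ Γ').filter (fun q => q.1 • q.2 = m), (H q.1 : ℂ)) *
            eC (∑ i, (m i : ℝ) * ω i)) := by ring
        _ = _ := by rw [hinner]
    rw [e1, e2, e3, key1 ω]
    ring
  have key := coeff_eq_zero U d key0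
  have h0T : (0 : ℤ) ∈ T := by
    simp [hTdef, Set.Finite.mem_toFinset, Function.mem_support, hHint.1]
  constructor
  · -- h 0 = 1
    have hfilter0 : (T ×ˢ Γ').filter (fun q => q.1 • q.2 = (0 : Fin n → ℤ))
        = ({(0 : ℤ)} : Finset ℤ) ×ˢ Γ' := by
      ext q
      simp only [Finset.mem_filter, Finset.mem_product, Finset.mem_singleton]
      constructor
      · rintro ⟨⟨hq1, hq2⟩, hq3⟩
        refine ⟨?_, hq2⟩
        by_contra hq1ne
        have hq2ne : q.2 ≠ 0 := Finset.ne_of_mem_erase hq2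
        obtain ⟨i, hi⟩ := Function.ne_iff.mp hq2ne
        have hcc := congrFun hq3 i
        simp only [Pi.smul_apply, smul_eq_mul, Pi.zero_apply] at hcc hi
        rcases mul_eq_zero.mp hcc with h' | h'
        · exact hq1ne h'
        · exact hi h'
      · rintro ⟨hq1, hq2⟩
        exact ⟨⟨by rw [hq1]; exact h0T, hq2⟩, by rw [show q.1 = (0:ℤ) from hq1]; simp⟩
    have hsum0 : ∑ q ∈ (T ×ˢ Γ').filter (fun q => q.1 • q.2 = (0 : Fin n → ℤ)), (H q.1 : ℂ)
        = P ^ n - 1 := by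
      rw [hfilter0, Finset.sum_product]
      simp only [Finset.sum_singleton, hHint.1, Complex.ofReal_one, Finset.sum_const,
        nsmul_eq_mul, mul_one, cardΓ']
      rw [hPdef]
      push_cast [Nat.one_le_pow n p hp.pos]
      ring
    have heq := key 0 h0U
    simp only [hddef] at heq
    rw [if_pos trivial, hsum0] at heq
    have hC : (h 0 : ℂ) = 1 := by
      have hPn' : P ^ n ≠ 0 := pow_ne_zero _ hPne
      have hPn1' : P ^ (n - 1) ≠ 0 := pow_ne_zero _ hPne
      have hval : A * B + A * (1 / P) * (P ^ n - 1) = 1 / P ^ n := by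
        rw [hAdef, hBdef, ← hPn]
        field_simp
        ring
      have h2 : 1 / P ^ n * (h 0 : ℂ) = A * B + A * (1 / P) * (P ^ n - 1) := by
        linear_combination heq
      rw [hval] at h2
      field_simp at h2
      exact_mod_cast h2
    exact_mod_cast hC
  · intro k hk0 hkdvd
    by_cases hkS : k ∈ S
    · have hdk := key k (hSU hkS)
      simp only [hddef] at hdk
      rw [if_neg hk0] at hdk
      have hfilterk : (T ×ˢ Γ').filter (fun q => q.1 • q.2 = k) = ∅ := by
        rw [Finset.filter_eq_empty_iff]
        intro q hq
        obtain ⟨hq1, hq2⟩ := Finset.mem_product.mp hq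
        intro hq3
        have hq1ne : q.1 ≠ 0 := by
          intro hq10
          apply hk0
          rw [← hq3, hq10]
          simp
        have hpq1 : (p : ℤ) ∣ q.1 := by
          by_contra hnd
          have hprime : Prime (p : ℤ) := Nat.prime_iff_prime_int.mp hp
          have hdvd2 : ∀ i, (p : ℤ) ∣ q.2 i := by
            intro i
            have hdi := hkdvd i
            rw [← hq3] at hdi
            simp only [Pi.smul_apply, smul_eq_mul] at hdi
            rcases hprime.dvd_mul.mp hdi with h' | h'
            · exact absurd h' hnd
            · exact h'
          exact Finset.ne_of_mem_erase hq2
            (hΓzero q.2 (Finset.mem_of_mem_erase hq2) hdvd2)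
        have hH0 : H q.1 = 0 := hHint.2 q.1 hq1ne hpq1
        simp only [hTdef, Set.Finite.mem_toFinset, Function.mem_support] at hq1
        exact hq1 hH0
      rw [hfilterk] at hdk
      simp only [Finset.sum_empty, mul_zero, sub_zero] at hdk
      have hPn' : P ^ n ≠ 0 := pow_ne_zero _ hPne
      have : (h k : ℂ) = 0 := by
        field_simp at hdk
        rw [mul_zero] at hdk
        exact_mod_cast hdk
      exact_mod_cast this
    · by_contra hne
      exact hkS (by simp [hSdef, Set.Finite.mem_toFinset, Function.mem_support, hne])
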